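/- Let G, N be finite groups of the same order, f : G → N a homomorphism, and 𝔣(σ) = conj(f(σ)) (conjugation by f(σ)) for σ ∈ G. Then the map sending a crossed homomorphism 𝔤 ∈ Z¹_𝔣(G,N) to the function σ ↦ 𝔤(σ)·f(σ) is a bijection from Z¹_𝔣(G,N) to Hom(G,N), and 𝔤 is bijective if and only if the pair (f, σ ↦ 𝔤(σ)f(σ)) is fixed point free. -/

import Mathlib

/-- When 𝔣(σ) = conj(f(σ)) for a homomorphism f : G → N, the map 𝔤 ↦ (σ ↦ 𝔤(σ)·f(σ))
is a bijection from the crossed homomorphisms Z¹_𝔣(G,N) to Hom(G,N); moreover a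
crossed homomorphism 𝔤 is bijective iff the pair (f, σ ↦ 𝔤(σ)f(σ)) is
fixed point free. -/
theorem crossed_hom_equiv_hom_of_inner (G N : Type*) [Group G] [Group N]
    [Fintype G] [Fintype N] (hcard : Fintype.card G = Fintype.card N)
    (f : G →* N) :
    (Set.BijOn (fun (𝔤 : G → N) => fun σ => 𝔤 σ * f σ)
        {𝔤 | ∀ σ τ : G, 𝔤 (σ * τ) = 𝔤 σ * (f σ * 𝔤 τ * (f σ)⁻¹)}
        {h | ∀ σ τ : G, h (σ * τ) = h σ * h τ}) ∧
      ∀ 𝔤 : G → N, (∀ σ τ : G, 𝔤 (σ * τ) = 𝔤 σ * (f σ * 𝔤 τ * (f σ)⁻¹)) →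
        (Function.Bijective 𝔤 ↔ ∀ σ : G, f σ = 𝔤 σ * f σ → σ = 1) := by
  constructor
  · refine ⟨fun 𝔤 h𝔤 σ τ => ?_, fun 𝔤 h𝔤 𝔥 h𝔥 hst => ?_, fun h hh => ?_⟩
    · simp only [h𝔤 σ τ, map_mul]; group
    · funext σ
      have := congrFun hst σ
      simpa using mul_right_cancel (b := f σ) this
    · refine ⟨fun σ => h σ * (f σ)⁻¹, fun σ τ => ?_, ?_⟩
      · simp only [hh σ τ, map_mul]; group
      · funext σ; simp
  · intro 𝔤 h𝔤
    have hone : 𝔤 1 = 1 := by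
      have := h𝔤 1 1
      simp only [mul_one, map_one, one_mul, inv_one] at this
      exact mul_eq_left.mp this.symm
    constructor
    · intro hb σ hσ
      have : 𝔤 σ = 1 := by
        have := mul_right_cancel (b := f σ) (by simpa using hσ.symm)
        simpa using this
      exact hb.injective (this.trans hone.symm)
    · intro hfpf
      rw [Fintype.bijective_iff_injective_and_card]
      refine ⟨fun σ τ h => ?_, hcard⟩
      have hmul : ∀ a b : G, 𝔤 (a * b) * f (a * b) = (𝔤 a * f a) * (𝔤 b * f b) := by
        intro a b; simp only [h𝔤 a b, map_mul]; group
      have key : 𝔤 (τ⁻¹ * σ) * f (τ⁻¹ * σ) = f (τ⁻¹ * σ) := by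
        have h1 := hmul τ (τ⁻¹ * σ)
        rw [mul_inv_cancel_left] at h1
        apply mul_left_cancel (a := 𝔤 τ * f τ)
        rw [← h1, h, map_mul, map_inv]
        group
      have := hfpf (τ⁻¹ * σ) (by
        have hx : 𝔤 (τ⁻¹ * σ) = 1 := mul_eq_right.mp key
        rw [hx, one_mul])
      have := eq_of_inv_mul_eq_one (a := τ) (b := σ) this
      exact this.symm
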